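/- Let B be a unital ℂ-algebra with an involution * (a *-algebra), ε : B → ℂ a unital *-homomorphism (so ε(b*) = conj(ε(b))), H a complex inner product space, η : B → H a ℂ-linear map, and φ : B → ℂ a ℂ-linear functional satisfying the coboundary relation φ(a*·b) − conj(ε(a))·φ(b) − conj(φ(a))·ε(b) = ⟨η(a), η(b)⟩ for all a,b ∈ B. Then φ vanishes on K₃ (the span of products of three elements of ker ε) if and only if φ(a*·a) = 0 for all a ∈ K₂ (the span of products of two elements of ker ε). -/

import Mathlib

/-- Characterization of Gaussian functionals via the coboundary relation:
`φ` vanishes on `K₃ = (ker ε)³` iff `φ (a* · a) = 0` for all `a ∈ K₂`. -/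
theorem gaussian_iff_vanishes_on_star_sq_K2
    {B H : Type*} [Ring B] [Algebra ℂ B] [StarRing B] [StarModule ℂ B]
    [NormedAddCommGroup H] [InnerProductSpace ℂ H]
    (ε : B →ₐ[ℂ] ℂ) (hεstar : ∀ b : B, ε (star b) = starRingEnd ℂ (ε b))
    (η : B →ₗ[ℂ] H) (φ : B →ₗ[ℂ] ℂ)
    (hcobound : ∀ a b : B,
      φ (star a * b) - starRingEnd ℂ (ε a) * φ b - starRingEnd ℂ (φ a) * ε b
        = (inner ℂ (η a) (η b) : ℂ)) :
    (∀ x ∈ (LinearMap.ker ε.toLinearMap) ^ 3, φ x = 0) ↔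
    (∀ a ∈ (LinearMap.ker ε.toLinearMap) ^ 2, φ (star a * a) = 0) := by
  set K := LinearMap.ker ε.toLinearMap with hK
  have hmem : ∀ x : B, x ∈ K ↔ ε x = 0 := fun x => by
    simp [hK, LinearMap.mem_ker]
  have hstarK : ∀ x ∈ K, star x ∈ K := by
    intro x hx
    rw [hmem] at hx ⊢
    rw [hεstar, hx, map_zero]
  have hK2le : K ^ 2 ≤ K := by
    rw [pow_two]
    exact Submodule.mul_le.2 fun m hm n hn => by
      rw [hmem] at hm hn ⊢
      rw [map_mul, hm, hn, mul_zero]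
  have hεK2 : ∀ x ∈ K ^ 2, ε x = 0 := fun x hx => (hmem x).1 (hK2le hx)
  have hstarK2 : ∀ x ∈ K ^ 2, star x ∈ K ^ 2 := by
    intro x hx
    rw [pow_two] at hx ⊢
    refine Submodule.mul_induction_on hx (fun m hm n hn => ?_) (fun a b ha hb => ?_)
    · rw [star_mul]
      exact Submodule.mul_mem_mul (hstarK n hn) (hstarK m hm)
    · rw [star_add]; exact add_mem ha hb
  constructor
  · intro h a ha
    apply h
    have : star a ∈ K := hstarK a (hK2le ha)
    have h3 : K * K ^ 2 ≤ K ^ 3 := le_of_eq (pow_succ' K 2).symm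
    exact h3 (Submodule.mul_mem_mul this ha)
  · intro h
    have hη : ∀ x ∈ K ^ 2, η x = 0 := by
      intro x hx
      have hc := hcobound x x
      rw [h x hx, hεK2 x hx] at hc
      simp only [map_zero, mul_zero, zero_mul, sub_zero, zero_sub, neg_zero,
        zero_mul, sub_zero] at hc
      have : (inner ℂ (η x) (η x) : ℂ) = 0 := by linear_combination -hc
      exact inner_self_eq_zero.mp this
    intro x hx
    have hx' : x ∈ K ^ 2 * K := by
      rw [← pow_succ]; exact hx
    refine Submodule.mul_induction_on hx' (fun m hm n hn => ?_) (fun a b ha hb => ?_)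
    · have hc := hcobound (star m) n
      rw [star_star] at hc
      have h1 : ε (star m) = 0 := (hmem _).1 (hstarK m (hK2le hm))
      have h2 : ε n = 0 := (hmem n).1 hn
      have h3 : η (star m) = 0 := hη _ (hstarK2 m hm)
      rw [h1, h2, h3] at hc
      simpa using hc
    · rw [map_add, ha, hb, add_zero]
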